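/- Let N be a closed separable linear sublattice of real Lᵖ(X), 1 ≤ p < ∞. Then there exists e ∈ N with e ≥ 0 such that for every g ∈ N, the support of g is contained in the support of e (up to null sets), i.e. g vanishes a.e. on the set where e = 0. -/

import Mathlib

open MeasureTheory Filter Topology

set_option synthInstance.maxHeartbeats 1000000
set_option maxHeartbeats 1000000

/-- Lemma 7: a closed separable sublattice `N` of real `Lᵖ` has an element
`e ≥ 0` whose support contains (up to null sets) the support of every `g ∈ N`. -/
theorem exists_dominating_support
    {X : Type*} [MeasurableSpace X] (μ : Measure X) [SigmaFinite μ]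
    (p : ENNReal) [Fact (1 ≤ p)] (hp : p ≠ ⊤)
    (N : Submodule ℝ (Lp ℝ p μ)) (hclosed : IsClosed (N : Set (Lp ℝ p μ)))
    (habs : ∀ f ∈ N, |f| ∈ N)
    (hsep : ∃ D : Set (Lp ℝ p μ), D.Countable ∧ D ⊆ N ∧ (N : Set (Lp ℝ p μ)) ⊆ closure D) :
    ∃ e ∈ N, 0 ≤ e ∧ ∀ g ∈ N, ∀ᵐ x ∂μ, e x = 0 → g x = 0 := by
  obtain ⟨D, hDcount, hDN, hdense⟩ := hsep
  have h0 : (0 : Lp ℝ p μ) ∈ N := N.zero_mem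
  set D' : Set (Lp ℝ p μ) := insert 0 D with hD'
  have hD'count : D'.Countable := hDcount.insert 0
  have hD'N : D' ⊆ (N : Set (Lp ℝ p μ)) := Set.insert_subset_iff.mpr ⟨h0, hDN⟩
  have hD'dense : (N : Set (Lp ℝ p μ)) ⊆ closure D' :=
    hdense.trans (closure_mono (Set.subset_insert _ _))
  obtain ⟨u, hu⟩ := hD'count.exists_eq_range ⟨0, Set.mem_insert _ _⟩
  have huN : ∀ n, u n ∈ N := fun n => hD'N (hu ▸ Set.mem_range_self n)
  set c : ℕ → ℝ := fun n => ((2 : ℝ) ^ n * (1 + ‖u n‖))⁻¹ with hc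
  have hcpos : ∀ n, 0 < c n := by
    intro n
    have : (0 : ℝ) < 1 + ‖u n‖ := by positivity
    positivity
  set t : ℕ → Lp ℝ p μ := fun n => c n • |u n| with ht
  have htN : ∀ n, t n ∈ N := fun n => N.smul_mem _ (habs _ (huN n))
  have htnonneg : ∀ n, (0 : Lp ℝ p μ) ≤ t n := by
    intro n
    refine (Lp.coeFn_nonneg (t n)).mp ?_
    filter_upwards [Lp.coeFn_smul (c n) |u n|, Lp.coeFn_abs (u n)] with x hx1 hx2
    show (0 : ℝ) ≤ (t n : X → ℝ) x
    rw [ht, hx1]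
    simp only [Pi.smul_apply, smul_eq_mul]
    rw [hx2]
    exact mul_nonneg (hcpos n).le (abs_nonneg _)
  have hnorm : ∀ n, ‖t n‖ ≤ (1 / 2 : ℝ) ^ n := by
    intro n
    have h1 : (0 : ℝ) < 1 + ‖u n‖ := by positivity
    rw [ht, norm_smul, Real.norm_eq_abs, abs_of_pos (hcpos n), norm_abs_eq_norm]
    calc c n * ‖u n‖ ≤ c n * (1 + ‖u n‖) := by
          apply mul_le_mul_of_nonneg_left _ (hcpos n).le
          linarith [norm_nonneg (u n)]
      _ = ((2 : ℝ) ^ n)⁻¹ := by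
          rw [hc]
          field_simp
      _ = (1 / 2 : ℝ) ^ n := by rw [one_div, inv_pow]
  have hsum : Summable t :=
    Summable.of_norm_bounded summable_geometric_two hnorm
  set e : Lp ℝ p μ := ∑' n, t n with he
  have heN : e ∈ N := by
    have htend := hsum.hasSum.tendsto_sum_nat
    refine hclosed.mem_of_tendsto htend (Eventually.of_forall fun n => ?_)
    exact N.sum_mem fun i _ => htN i
  have henonneg : (0 : Lp ℝ p μ) ≤ e := tsum_nonneg htnonneg
  -- each u n vanishes a.e. on {e = 0}
  have hn : ∀ n, ∀ᵐ x ∂μ, (e : X → ℝ) x = 0 → (u n : X → ℝ) x = 0 := by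
    intro n
    have hle : t n ≤ e := Summable.le_tsum hsum n fun m _ => htnonneg m
    have h1 := (Lp.coeFn_le (t n) e).mpr hle
    have h2 := (Lp.coeFn_nonneg (t n)).mpr (htnonneg n)
    filter_upwards [h1, h2, Lp.coeFn_smul (c n) |u n|, Lp.coeFn_abs (u n)]
      with x hx1 hx2 hx3 hx4 hex
    have hz : (t n : X → ℝ) x = 0 := le_antisymm (hex ▸ hx1) hx2
    rw [ht] at hz
    rw [hx3] at hz
    simp only [Pi.smul_apply, smul_eq_mul] at hz
    rw [hx4] at hz
    have := mul_eq_zero.mp hz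
    rcases this with h | h
    · exact absurd h (hcpos n).ne'
    · exact abs_eq_zero.mp h
  have hall : ∀ᵐ x ∂μ, ∀ n, (e : X → ℝ) x = 0 → (u n : X → ℝ) x = 0 := ae_all_iff.mpr hn
  refine ⟨e, heN, henonneg, fun g hg => ?_⟩
  have hgcl : g ∈ closure D' := hD'dense hg
  rw [hu] at hgcl
  obtain ⟨v, hvmem, hvtend⟩ := mem_closure_iff_seq_limit.mp hgcl
  choose m hm using fun k => hvmem k
  have hmeas : TendstoInMeasure μ (fun k => (v k : X → ℝ)) atTop g :=
    tendstoInMeasure_of_tendsto_Lp hvtend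
  obtain ⟨ns, _, hae⟩ := hmeas.exists_seq_tendsto_ae
  filter_upwards [hall, hae] with x hx htend hex
  have hz : ∀ i, (v (ns i) : X → ℝ) x = 0 := by
    intro i
    have : (v (ns i) : X → ℝ) x = (u (m (ns i)) : X → ℝ) x := by
      rw [hm (ns i)]
    rw [this]
    exact hx _ hex
  have : Tendsto (fun i => (v (ns i) : X → ℝ) x) atTop (𝓝 0) := by
    simp only [hz]
    exact tendsto_const_nhds
  exact tendsto_nhds_unique htend this
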